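/- Let G, H be TSI Polish groups, S : G → H a continuous homomorphism, and U ∋ 1_G an open subset of G such that the restriction S↾U : U → S(U) is a homeomorphism. Then for all x, y ∈ G^ω with lim_p x(p)y(p)^{-1} = 1_G (equivalently d_G(x(p),y(p)) → 0 for a two-sided invariant metric d_G), the sequence (x(0)···x(n)y(n)^{-1}···y(0)^{-1})_n converges in G if and only if (S(x(0))···S(x(n))S(y(n))^{-1}···S(y(0))^{-1})_n converges in H. -/

import Mathlib

open Filter Topology

/-- A Polish group is TSI if it admits a compatible two-sided invariant metric. -/
def IsTSI (G : Type*) [Group G] [t : TopologicalSpace G] : Prop :=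
  ∃ m : MetricSpace G, m.toUniformSpace.toTopologicalSpace = t ∧
    (∀ g h k : G, @dist G m.toDist (g * h) (g * k) = @dist G m.toDist h k) ∧
    (∀ g h k : G, @dist G m.toDist (h * g) (k * g) = @dist G m.toDist h k)

/-- The partial product `x(0) ⋯ x(n)`. -/
def partialProd {G : Type*} [Monoid G] (x : ℕ → G) (n : ℕ) : G :=
  ((List.range (n + 1)).map x).prod

section Aux

open Set UniformSpace

theorem myIsGδ_preimage {X Y : Type*} [TopologicalSpace X] [TopologicalSpace Y] {s : Set Y}
    (hs : IsGδ s) {f : X → Y} (hf : Continuous f) : IsGδ (f ⁻¹' s) := by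
  obtain ⟨T, hT, hTc, rfl⟩ := hs
  rw [Set.preimage_sInter]
  exact IsGδ.biInter hTc fun t ht => ((hT t ht).preimage hf).isGδ

theorem myIsGδ_range {X : Type*} [MetricSpace X] {T : Type*} (mT : MetricSpace T)
    (hcomp : @CompleteSpace T mT.toUniformSpace) {f : T → X}
    (hf : @IsEmbedding T X mT.toUniformSpace.toTopologicalSpace _ f)
    (hd : Dense (Set.range f)) : IsGδ (Set.range f) := by
  letI := mT
  set P : ℕ → Set X := fun n =>
    {x | ∃ V : Set X, IsOpen V ∧ x ∈ V ∧
      ∀ a b : T, f a ∈ V → f b ∈ V → dist a b < 1 / (n + 1)} with hPdef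
  have hPopen : ∀ n, IsOpen (P n) := by
    intro n
    rw [isOpen_iff_mem_nhds]
    rintro x ⟨V, hVo, hxV, hV⟩
    exact Filter.mem_of_superset (hVo.mem_nhds hxV) fun x' hx' => ⟨V, hVo, hx', hV⟩
  have hsP : ∀ n, Set.range f ⊆ P n := by
    intro n y hy
    obtain ⟨a, rfl⟩ := hy
    have h3 : (0 : ℝ) < 1 / (3 * (n + 1)) := by positivity
    have hball : Metric.ball a (1 / (3 * (n + 1))) ∈ 𝓝 a := Metric.ball_mem_nhds a h3
    rw [hf.isInducing.nhds_eq_comap, Filter.mem_comap] at hball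
    obtain ⟨W, hW, hWsub⟩ := hball
    obtain ⟨V, hVW, hVo, hxV⟩ := _root_.mem_nhds_iff.1 hW
    refine ⟨V, hVo, hxV, fun b c hb hc => ?_⟩
    have hb' : dist b a < 1 / (3 * (n + 1)) := hWsub (hVW hb)
    have hc' : dist c a < 1 / (3 * (n + 1)) := hWsub (hVW hc)
    calc dist b c ≤ dist b a + dist a c := dist_triangle _ _ _
      _ < 1 / (3 * (n + 1)) + 1 / (3 * (n + 1)) := by
          rw [dist_comm a c]; linarith
      _ ≤ 1 / (n + 1) := by
          rw [← add_div, div_le_div_iff₀ (by positivity) (by positivity)]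
          ring_nf
          nlinarith [ (n : ℝ) ≥ 0 ]
  have hkey : (⋂ n, P n) ⊆ Set.range f := by
    intro x hx
    have hx' : ∀ n, x ∈ P n := by simpa using hx
    choose V hVo hxV hV using hx'
    have hpick : ∀ n : ℕ, ∃ t : T,
        f t ∈ (⋂ j ∈ Finset.range (n + 1), V j) ∩ Metric.ball x (1 / (n + 1)) := by
      intro n
      have hopen : IsOpen ((⋂ j ∈ Finset.range (n + 1), V j) ∩ Metric.ball x (1 / (n + 1))) :=
        (isOpen_biInter_finset fun j _ => hVo j).inter Metric.isOpen_ball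
      have hxmem : x ∈ (⋂ j ∈ Finset.range (n + 1), V j) ∩ Metric.ball x (1 / (n + 1)) := by
        refine ⟨by simp [hxV], Metric.mem_ball_self (by positivity)⟩
      obtain ⟨y, hy2, hy1⟩ := hd.exists_mem_open hopen ⟨x, hxmem⟩
      obtain ⟨t, rfl⟩ := hy2
      exact ⟨t, hy1⟩
    choose t ht using hpick
    have htV : ∀ p q : ℕ, p ≤ q → f (t q) ∈ V p := by
      intro p q hpq
      have := (ht q).1
      simp only [Set.mem_iInter] at this
      exact this p (Finset.mem_range.2 (Nat.lt_succ_of_le hpq))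
    have hcauchy : CauchySeq t := by
      rw [Metric.cauchySeq_iff]
      intro ε hε
      obtain ⟨N, hN⟩ := exists_nat_one_div_lt hε
      refine ⟨N, fun p hp q hq => ?_⟩
      rcases le_total p q with h | h
      · calc dist (t p) (t q) < 1 / (p + 1) := hV p _ _ (htV p p le_rfl) (htV p q h)
          _ ≤ 1 / (N + 1) := by
            apply one_div_le_one_div_of_le (by positivity)
            exact_mod_cast Nat.succ_le_succ hp
          _ < ε := by exact_mod_cast hN
      · calc dist (t p) (t q) = dist (t q) (t p) := dist_comm _ _
          _ < 1 / (q + 1) := hV q _ _ (htV q q le_rfl) (htV q p h)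
          _ ≤ 1 / (N + 1) := by
            apply one_div_le_one_div_of_le (by positivity)
            exact_mod_cast Nat.succ_le_succ hq
          _ < ε := by exact_mod_cast hN
    haveI := hcomp
    obtain ⟨c, hc⟩ := cauchySeq_tendsto_of_complete hcauchy
    have h1 : Tendsto (fun n => f (t n)) atTop (𝓝 (f c)) :=
      (hf.continuous.tendsto c).comp hc
    have h2 : Tendsto (fun n => f (t n)) atTop (𝓝 x) := by
      rw [tendsto_iff_dist_tendsto_zero]
      have hb : ∀ n : ℕ, dist (f (t n)) x ≤ 1 / (n + 1) := fun n => le_of_lt (ht n).2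
      exact squeeze_zero (fun n => dist_nonneg) hb tendsto_one_div_add_atTop_nhds_zero_nat
    have : x = f c := tendsto_nhds_unique h2 h1
    exact ⟨c, this.symm⟩
  have : Set.range f = ⋂ n, P n :=
    Set.Subset.antisymm (Set.subset_iInter fun n => hsP n) hkey
  rw [this]
  exact IsGδ.iInter fun n => (hPopen n).isGδ

theorem helper_isGδ {X : Type*} [MetricSpace X] {G : Type*} [mG : MetricSpace G]
    (hp : ∃ m' : MetricSpace G, m'.toUniformSpace.toTopologicalSpace =
      mG.toUniformSpace.toTopologicalSpace ∧ @CompleteSpace G m'.toUniformSpace)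
    {f : G → X} (hfemb : IsEmbedding f) (hd : Dense (Set.range f)) : IsGδ (Set.range f) := by
  obtain ⟨m', hm', hcomp⟩ := hp
  rw [← hm'] at hfemb
  exact myIsGδ_range (X := X) m' hcomp hfemb hd

theorem myCompleteAdd {G : Type*} [AddGroup G] [mG : MetricSpace G]
    (hp : ∃ m' : MetricSpace G, m'.toUniformSpace.toTopologicalSpace =
      mG.toUniformSpace.toTopologicalSpace ∧ @CompleteSpace G m'.toUniformSpace)
    (hl : ∀ g h k : G, dist (g + h) (g + k) = dist h k)
    (hr : ∀ g h k : G, dist (h + g) (k + g) = dist h k) : CompleteSpace G := by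
  have hneg : ∀ a b : G, dist (-a) (-b) = dist b a := by
    intro a b
    have h1 := hl b (-a) (-b)
    rw [add_neg_cancel] at h1
    have h2 := hr (-a) b a
    rw [add_neg_cancel] at h2
    rw [← h1, h2]
  have hsubdist : ∀ a₁ b₁ a₂ b₂ : G, dist (a₁ - b₁) (a₂ - b₂) ≤ dist a₁ a₂ + dist b₁ b₂ := by
    intro a₁ b₁ a₂ b₂
    calc dist (a₁ - b₁) (a₂ - b₂) ≤ dist (a₁ - b₁) (a₂ - b₁) + dist (a₂ - b₁) (a₂ - b₂) :=
          dist_triangle _ _ _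
      _ = dist a₁ a₂ + dist b₁ b₂ := by
          simp only [sub_eq_add_neg]
          rw [hr (-b₁) a₁ a₂, hl a₂ (-b₁) (-b₂), hneg, dist_comm b₂ b₁]
  haveI : IsUniformAddGroup G := by
    constructor
    rw [Metric.uniformContinuous_iff]
    intro ε hε
    refine ⟨ε / 2, by positivity, fun {a b} h => ?_⟩
    calc dist (a.1 - a.2) (b.1 - b.2) ≤ dist a.1 b.1 + dist a.2 b.2 := hsubdist _ _ _ _
      _ ≤ dist a b + dist a b := by
          have h1 : dist a.1 b.1 ≤ dist a b := by rw [Prod.dist_eq]; exact le_max_left _ _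
          have h2 : dist a.2 b.2 ≤ dist a b := by rw [Prod.dist_eq]; exact le_max_right _ _
          linarith
      _ < ε := by rw [Prod.dist_eq] at h ⊢; linarith
  set f : G → Completion G := ((↑) : G → Completion G) with hfdef
  have hiso : Isometry f := Completion.coe_isometry
  have hfemb : IsEmbedding f := hiso.isEmbedding
  have hd : Dense (Set.range f) := Completion.denseRange_coe
  have hGδ : IsGδ (Set.range f) := helper_isGδ hp hfemb hd
  have hsurj : Function.Surjective f := by
    intro g₀
    have hcont : Continuous (fun z : Completion G => -g₀ + z) := continuous_add_left (-g₀)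
    have h1 : Dense ((fun z : Completion G => -g₀ + z) ⁻¹' (Set.range f)) := by
      refine hd.preimage ?_
      exact (Homeomorph.addLeft (-g₀)).isOpenMap
    have h2 : IsGδ ((fun z : Completion G => -g₀ + z) ⁻¹' (Set.range f)) :=
      myIsGδ_preimage hGδ hcont
    obtain ⟨w, hw1, hw2⟩ := (Dense.inter_of_Gδ h2 hGδ h1 hd).nonempty
    obtain ⟨a, ha⟩ := hw1
    obtain ⟨b, hb⟩ := hw2
    refine ⟨b - a, ?_⟩
    have ha' : f a = -g₀ + w := ha
    have hcsub : f (b - a) = f b - f a := Completion.coe_sub b a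
    rw [hcsub, hb, ha', sub_eq_add_neg, neg_add_rev, neg_neg, add_neg_cancel_left]
  exact ((Completion.isUniformInducing_coe G).completeSpace_congr hsurj).mpr inferInstance

theorem myCompleteMul {G : Type*} [Group G] [mG : MetricSpace G]
    (hp : ∃ m' : MetricSpace G, m'.toUniformSpace.toTopologicalSpace =
      mG.toUniformSpace.toTopologicalSpace ∧ @CompleteSpace G m'.toUniformSpace)
    (hl : ∀ g h k : G, dist (g * h) (g * k) = dist h k)
    (hr : ∀ g h k : G, dist (h * g) (k * g) = dist h k) : CompleteSpace G :=
  myCompleteAdd (G := Additive G) hp hl hr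

theorem myBridge {G : Type*} [Group G] [t : TopologicalSpace G] [PolishSpace G]
    (m : MetricSpace G) (htop : m.toUniformSpace.toTopologicalSpace = t)
    (hl : ∀ g h k : G, @dist G m.toDist (g * h) (g * k) = @dist G m.toDist h k)
    (hr : ∀ g h k : G, @dist G m.toDist (h * g) (k * g) = @dist G m.toDist h k)
    (z : ℕ → G)
    (hz : ∀ ε > (0:ℝ), ∃ N, ∀ p ≥ N, ∀ q ≥ N, @dist G m.toDist (z p) (z q) < ε) :
    ∃ l, Tendsto z atTop (𝓝 l) := by
  subst htop
  letI := m
  haveI : CompleteSpace G := myCompleteMul (‹PolishSpace G›).complete hl hr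
  have hcauchy : CauchySeq z := Metric.cauchySeq_iff.2 hz
  exact cauchySeq_tendsto_of_complete hcauchy

theorem partialProd_succ {G : Type*} [Monoid G] (x : ℕ → G) (n : ℕ) :
    partialProd x (n + 1) = partialProd x n * x (n + 1) := by
  unfold partialProd
  rw [List.range_succ, List.map_append, List.prod_append]
  simp

theorem map_partialProd {G H : Type*} [Monoid G] [Monoid H] (S : G →* H) (x : ℕ → G) (n : ℕ) :
    partialProd (fun p => S (x p)) n = S (partialProd x n) := by
  unfold partialProd
  rw [map_list_prod, List.map_map]
  rfl

end Aux

/-- Let `G, H` be TSI Polish groups, `S : G → H` a continuous homomorphism and `U` an open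
neighborhood of `1_G` on which `S` restricts to a homeomorphism onto its image. Then for
all `x, y ∈ G^ω` with `x(p)·y(p)⁻¹ → 1`, the sequence `(x(0)⋯x(n)·y(n)⁻¹⋯y(0)⁻¹)_n`
converges in `G` iff `(S(x(0))⋯S(x(n))·S(y(n))⁻¹⋯S(y(0))⁻¹)_n` converges in `H`. -/
theorem stmt_11 (G H : Type*) [Group G] [TopologicalSpace G] [IsTopologicalGroup G]
    [PolishSpace G] [Group H] [TopologicalSpace H] [IsTopologicalGroup H] [PolishSpace H]
    (hG : IsTSI G) (hH : IsTSI H)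
    (S : G →* H) (hS : Continuous S)
    (U : Set G) (hUopen : IsOpen U) (hU1 : (1 : G) ∈ U)
    (hemb : IsEmbedding (fun x : U => S x)) :
    ∀ x y : ℕ → G, Tendsto (fun p => x p * (y p)⁻¹) atTop (𝓝 1) →
      ((∃ l : G, Tendsto (fun n => partialProd x n * (partialProd y n)⁻¹) atTop (𝓝 l)) ↔
       (∃ l : H, Tendsto
          (fun n => partialProd (fun p => S (x p)) n * (partialProd (fun p => S (y p)) n)⁻¹)
          atTop (𝓝 l))) := by
  classical
  obtain ⟨mG, hGt, hGl, hGr⟩ := hG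
  obtain ⟨mH, hHt, hHl, hHr⟩ := hH
  subst hGt
  subst hHt
  letI := mG
  letI := mH
  intro x y hxy
  set z : ℕ → G := fun n => partialProd x n * (partialProd y n)⁻¹ with hzdef
  set gg : ℕ → ℕ → G := fun n m =>
    (partialProd x n)⁻¹ * (partialProd x m * (partialProd y m)⁻¹) * partialProd y n with hggdef
  have hfunS : (fun n => partialProd (fun p => S (x p)) n * (partialProd (fun p => S (y p)) n)⁻¹)
      = fun n => S (z n) := by
    funext n
    rw [map_partialProd, map_partialProd, hzdef]
    simp
  rw [hfunS]
  -- invariance facts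
  have hdistG : ∀ a b g : G, dist (a * g * b) (a * b) = dist g 1 := by
    intro a b g
    have h1 : dist (a * g * b) (a * b) = dist (a * g) a := hGr b (a * g) a
    have h2 := hGl a g 1
    rw [mul_one] at h2
    rw [h1, h2]
  have hdistH : ∀ a b g : H, dist (a * g * b) (a * b) = dist g 1 := by
    intro a b g
    have h1 : dist (a * g * b) (a * b) = dist (a * g) a := hHr b (a * g) a
    have h2 := hHl a g 1
    rw [mul_one] at h2
    rw [h1, h2]
  have e1 : ∀ n m : ℕ, z m = partialProd x n * gg n m * (partialProd y n)⁻¹ := by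
    intro n m
    simp only [hzdef, hggdef]
    group
  have e2 : ∀ n : ℕ, z n = partialProd x n * (partialProd y n)⁻¹ := fun n => rfl
  have hdistz : ∀ n m : ℕ, dist (z m) (z n) = dist (gg n m) 1 := by
    intro n m
    calc dist (z m) (z n)
        = dist (partialProd x n * gg n m * (partialProd y n)⁻¹)
            (partialProd x n * (partialProd y n)⁻¹) := by rw [← e1 n m, ← e2 n]
      _ = dist (gg n m) 1 := hdistG _ _ _
  have hdistw : ∀ n m : ℕ, dist (S (z m)) (S (z n)) = dist (S (gg n m)) 1 := by
    intro n m
    have e1S : S (z m) = S (partialProd x n) * S (gg n m) * (S (partialProd y n))⁻¹ := by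
      rw [e1 n m, map_mul, map_mul, map_inv]
    have e2S : S (z n) = S (partialProd x n) * (S (partialProd y n))⁻¹ := by
      rw [e2 n, map_mul, map_inv]
    rw [e1S, e2S]
    exact hdistH _ _ _
  have hstep : ∀ n : ℕ, gg n (n + 1) = x (n + 1) * (y (n + 1))⁻¹ := by
    intro n
    simp only [hggdef, partialProd_succ]
    group
  constructor
  · rintro ⟨l, hzl⟩
    exact ⟨S l, (hS.tendsto l).comp hzl⟩
  · rintro ⟨l, hl⟩
    have hwc : ∀ δ > (0:ℝ), ∃ M, ∀ p ≥ M, ∀ q ≥ M, dist (S (z p)) (S (z q)) < δ := by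
      intro δ hδ
      rw [Metric.tendsto_atTop] at hl
      obtain ⟨M, hM⟩ := hl (δ / 2) (by positivity)
      refine ⟨M, fun p hp q hq => ?_⟩
      have h1 := hM p hp
      have h2 := hM q hq
      calc dist (S (z p)) (S (z q)) ≤ dist (S (z p)) l + dist l (S (z q)) := dist_triangle _ _ _
        _ < δ := by rw [dist_comm l]; linarith
    have hcau : ∀ ε > (0:ℝ), ∃ N, ∀ p ≥ N, ∀ q ≥ N, dist (z p) (z q) < ε := by
      by_contra hcon
      push_neg at hcon
      obtain ⟨ε₀, hε₀, hbad⟩ := hcon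
      obtain ⟨ε₁, hε₁pos, hball⟩ := Metric.isOpen_iff.1 hUopen 1 hU1
      set ε := min ε₀ ε₁ / 2 with hε
      have hεpos : 0 < ε := by positivity
      have hεε₀ : ε ≤ ε₀ := by
        have := min_le_left ε₀ ε₁
        rw [hε]; linarith
      have h2εε₁ : 2 * ε ≤ ε₁ := by
        have := min_le_right ε₀ ε₁
        rw [hε]; linarith
      rw [Metric.tendsto_atTop] at hxy
      obtain ⟨N₁, hN₁⟩ := hxy ε hεpos
      have hsel : ∀ k : ℕ, ∃ n m : ℕ, k ≤ n ∧ n < m ∧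
          ε ≤ dist (z m) (z n) ∧ dist (z m) (z n) < 2 * ε := by
        intro k
        obtain ⟨p, hp, q, hq, hpq⟩ := hbad (max k (N₁ + 1))
        have hne : p ≠ q := by
          rintro rfl
          rw [dist_self] at hpq
          linarith
        obtain ⟨n0, m0, hn0, hm0, hd0⟩ : ∃ n0 m0 : ℕ,
            max k (N₁ + 1) ≤ n0 ∧ n0 < m0 ∧ ε ≤ dist (z m0) (z n0) := by
          rcases lt_or_gt_of_ne hne with h | h
          · exact ⟨p, q, hp, h, by rw [dist_comm]; linarith⟩
          · exact ⟨q, p, hq, h, by linarith⟩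
        have hn0N₁ : N₁ + 1 ≤ n0 := le_trans (le_max_right _ _) hn0
        have hex : ∃ j : ℕ, ε ≤ dist (z (n0 + j + 1)) (z n0) :=
          ⟨m0 - n0 - 1, by rw [show n0 + (m0 - n0 - 1) + 1 = m0 by omega]; exact hd0⟩
        have hspec : ε ≤ dist (z (n0 + Nat.find hex + 1)) (z n0) := Nat.find_spec hex
        refine ⟨n0, n0 + Nat.find hex + 1, le_trans (le_max_left _ _) hn0, by omega, hspec, ?_⟩
        have hstepdist : ∀ i : ℕ, dist (z (i + 1)) (z i) = dist (x (i + 1) * (y (i + 1))⁻¹) 1 := by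
          intro i
          rw [hdistz i (i + 1), hstep i]
        rcases Nat.eq_zero_or_pos (Nat.find hex) with hj0 | hjpos
        · rw [hj0]
          have heq : dist (z (n0 + 0 + 1)) (z n0) = dist (x (n0 + 1) * (y (n0 + 1))⁻¹) 1 := by
            rw [show n0 + 0 + 1 = n0 + 1 by omega]
            exact hstepdist n0
          rw [heq]
          have := hN₁ (n0 + 1) (by omega)
          linarith
        · obtain ⟨j', hj'⟩ : ∃ j', Nat.find hex = j' + 1 := ⟨Nat.find hex - 1, by omega⟩
          rw [hj']
          have hmin : dist (z (n0 + j' + 1)) (z n0) < ε :=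
            not_le.mp (Nat.find_min hex (show j' < Nat.find hex by omega))
          have hstep2 : dist (z (n0 + (j' + 1) + 1)) (z (n0 + j' + 1)) < ε := by
            rw [show n0 + (j' + 1) + 1 = (n0 + j' + 1) + 1 by omega, hstepdist (n0 + j' + 1)]
            exact hN₁ (n0 + j' + 1 + 1) (by omega)
          calc dist (z (n0 + (j' + 1) + 1)) (z n0)
              ≤ dist (z (n0 + (j' + 1) + 1)) (z (n0 + j' + 1)) + dist (z (n0 + j' + 1)) (z n0) :=
                dist_triangle _ _ _
            _ < 2 * ε := by linarith
      choose nf mf hknf hnmf hlow hupp using hsel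
      have hmemU : ∀ k, gg (nf k) (mf k) ∈ U := by
        intro k
        apply hball
        rw [Metric.mem_ball]
        calc dist (gg (nf k) (mf k)) 1 = dist (z (mf k)) (z (nf k)) := (hdistz _ _).symm
          _ < 2 * ε := hupp k
          _ ≤ ε₁ := h2εε₁
      have hSgg : Tendsto (fun k => S (gg (nf k) (mf k))) atTop (𝓝 (1 : H)) := by
        rw [Metric.tendsto_atTop]
        intro δ hδ
        obtain ⟨M, hM⟩ := hwc δ hδ
        refine ⟨M, fun k hk => ?_⟩
        have hkM : M ≤ nf k := le_trans hk (hknf k)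
        have h1 : dist (S (z (mf k))) (S (z (nf k))) < δ :=
          hM _ (le_trans hkM (le_of_lt (hnmf k))) _ hkM
        calc dist (S (gg (nf k) (mf k))) 1
            = dist (S (z (mf k))) (S (z (nf k))) := (hdistw _ _).symm
          _ < δ := h1
      have h1U : Tendsto (fun k => (⟨gg (nf k) (mf k), hmemU k⟩ : U)) atTop
          (𝓝 (⟨1, hU1⟩ : U)) := by
        rw [hemb.tendsto_nhds_iff]
        have hone : S (1 : G) = 1 := map_one S
        simpa [Function.comp_def, hone] using hSgg
      have h2 : Tendsto (fun k => gg (nf k) (mf k)) atTop (𝓝 (1 : G)) := by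
        have := (continuous_subtype_val.tendsto (⟨1, hU1⟩ : U)).comp h1U
        simpa [Function.comp_def] using this
      rw [Metric.tendsto_atTop] at h2
      obtain ⟨M, hM⟩ := h2 ε hεpos
      have hlt := hM M le_rfl
      have hge : ε ≤ dist (gg (nf M) (mf M)) 1 := by
        calc ε ≤ dist (z (mf M)) (z (nf M)) := hlow M
          _ = dist (gg (nf M) (mf M)) 1 := hdistz _ _
      linarith
    exact myBridge mG rfl hGl hGr z hcau
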